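/- Let p, q : ℕ and ℍ = Quaternion ℝ. Let A ∈ Matrix (Fin p) (Fin p) ℍ, B ∈ Matrix (Fin p) (Fin q) ℍ, C ∈ Matrix (Fin q) (Fin p) ℍ, D ∈ Matrix (Fin q) (Fin q) ℍ, and suppose g = fromBlocks A B C D satisfies g * H * gᴴ = H, where H is the diagonal matrix with first p entries 1 and last q entries −1 and gᴴ is the quaternionic conjugate transpose. Let X ∈ Matrix (Fin p) (Fin q) ℍ be such that (star w ⬝ᵥ ((1 − Xᴴ * X) *ᵥ w)).re > 0 for every nonzero w ∈ (Fin q → ℍ). Then C * X + D is a unit in the ring Matrix (Fin q) (Fin q) ℍ, the image of {(X *ᵥ w, w) | w} under (x,y) ↦ (A *ᵥ x + B *ᵥ y, C *ᵥ x + D *ᵥ y) equals {(X' *ᵥ w, w) | w} where X' = (A * X + B) * Ring.inverse (C * X + D), and (star w ⬝ᵥ ((1 − X'ᴴ * X') *ᵥ w)).re > 0 for every nonzero w. -/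

import Mathlib

open Matrix Quaternion

lemma aux_comm {R : Type*} [Ring R] [Algebra ℝ R] [FiniteDimensional ℝ R]
    {a b : R} (h : a * b = 1) : b * a = 1 := by
  have hsurj : Function.Surjective (LinearMap.mulLeft ℝ a) := fun x =>
    ⟨b * x, by simp [LinearMap.mulLeft_apply, ← mul_assoc, h]⟩
  have hinj : Function.Injective (LinearMap.mulLeft ℝ a) :=
    LinearMap.injective_iff_surjective.mpr hsurj
  have h2 : (LinearMap.mulLeft ℝ a) (b * a) = (LinearMap.mulLeft ℝ a) 1 := by
    simp [LinearMap.mulLeft_apply, ← mul_assoc, h]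
  exact hinj h2

lemma aux_isUnit {n : ℕ} (M : Matrix (Fin n) (Fin n) (Quaternion ℝ))
    (h : ∀ w : Fin n → Quaternion ℝ, w ≠ 0 → M *ᵥ w ≠ 0) : IsUnit M := by
  have hker : ∀ N : Matrix (Fin n) (Fin n) (Quaternion ℝ), M * N = 0 → N = 0 := by
    intro N hN
    have hv : ∀ w, N *ᵥ w = 0 := by
      intro w
      by_contra hw
      exact h _ hw (by rw [mulVec_mulVec, hN, zero_mulVec])
    apply Matrix.ext
    intro i j
    have := congrFun (hv (Pi.single j 1)) i
    simpa using this
  have hinj : Function.Injective (LinearMap.mulLeft ℝ M) := by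
    rw [← LinearMap.ker_eq_bot, LinearMap.ker_eq_bot']
    intro N hN
    exact hker N hN
  have hsurj := LinearMap.injective_iff_surjective.mp hinj
  obtain ⟨N, hN⟩ := hsurj 1
  exact ⟨⟨M, N, hN, aux_comm hN⟩, rfl⟩

lemma aux_re_eq {n : ℕ} (u : Fin n → Quaternion ℝ) :
    (star u ⬝ᵥ u).re = ∑ i, normSq (u i) := by
  simp only [dotProduct, Pi.star_apply, Quaternion.star_mul_self]
  rw [show (∑ x, ((normSq (u x) : ℝ) : Quaternion ℝ)).re
      = ∑ x, ((normSq (u x) : ℝ) : Quaternion ℝ).re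
      from map_sum (QuaternionAlgebra.reₗ (-1 : ℝ) 0 (-1)) _ _]
  simp

lemma aux_re_nonneg {n : ℕ} (u : Fin n → Quaternion ℝ) : 0 ≤ (star u ⬝ᵥ u).re := by
  rw [aux_re_eq]
  exact Finset.sum_nonneg fun i _ => Quaternion.normSq_nonneg

lemma aux_re_pos {n : ℕ} (u : Fin n → Quaternion ℝ) (hu : u ≠ 0) : 0 < (star u ⬝ᵥ u).re := by
  rw [aux_re_eq]
  obtain ⟨i, hi⟩ : ∃ i, u i ≠ 0 := by
    by_contra h; push_neg at h; exact hu (funext h)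
  exact Finset.sum_pos' (fun j _ => Quaternion.normSq_nonneg)
    ⟨i, Finset.mem_univ i,
      lt_of_le_of_ne Quaternion.normSq_nonneg
        (Ne.symm (Quaternion.normSq_ne_zero.mpr hi))⟩

lemma aux_quad {m n : ℕ} (N : Matrix (Fin m) (Fin n) (Quaternion ℝ))
    (w : Fin n → Quaternion ℝ) :
    (star w ⬝ᵥ ((1 - N.conjTranspose * N) *ᵥ w)).re
      = (star w ⬝ᵥ w).re - (star (N *ᵥ w) ⬝ᵥ (N *ᵥ w)).re := by
  rw [sub_mulVec, one_mulVec, dotProduct_sub, ← mulVec_mulVec,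
    dotProduct_mulVec, ← star_mulVec]
  simp [Quaternion.re_sub]

/-- Linear fractional action of `Sp(p,q)` on the quaternionic bounded symmetric domain
`{X | 1 − Xᴴ X ≫ 0}`: if `g = [[A,B],[C,D]]` satisfies `g H gᴴ = H` and `1 − Xᴴ X` is
positive definite, then `C X + D` is a unit, `g` maps the graph of `X` to the graph of
`X' = (A X + B)(C X + D)⁻¹`, and `1 − X'ᴴ X'` is positive definite. -/
theorem stmt_18 (p q : ℕ)
    (A : Matrix (Fin p) (Fin p) (Quaternion ℝ)) (B : Matrix (Fin p) (Fin q) (Quaternion ℝ))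
    (C : Matrix (Fin q) (Fin p) (Quaternion ℝ)) (D : Matrix (Fin q) (Fin q) (Quaternion ℝ))
    (H : Matrix (Fin p ⊕ Fin q) (Fin p ⊕ Fin q) (Quaternion ℝ))
    (hH : H = Matrix.fromBlocks 1 0 0 (-1))
    (hg : Matrix.fromBlocks A B C D * H * (Matrix.fromBlocks A B C D).conjTranspose = H)
    (X : Matrix (Fin p) (Fin q) (Quaternion ℝ))
    (hX : ∀ w : Fin q → Quaternion ℝ, w ≠ 0 →
      (star w ⬝ᵥ ((1 - X.conjTranspose * X) *ᵥ w)).re > 0) :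
    IsUnit (C * X + D) ∧
    (fun v : (Fin p → Quaternion ℝ) × (Fin q → Quaternion ℝ) =>
        (A *ᵥ v.1 + B *ᵥ v.2, C *ᵥ v.1 + D *ᵥ v.2)) ''
      {v | ∃ w, v = (X *ᵥ w, w)} =
      {v | ∃ w, v = (((A * X + B) * Ring.inverse (C * X + D)) *ᵥ w, w)} ∧
    (∀ w : Fin q → Quaternion ℝ, w ≠ 0 →
      (star w ⬝ᵥ ((1 - ((A * X + B) * Ring.inverse (C * X + D)).conjTranspose *
        ((A * X + B) * Ring.inverse (C * X + D))) *ᵥ w)).re > 0) := by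
  set g := Matrix.fromBlocks A B C D with hgdef
  -- H * H = 1
  have hHH : H * H = 1 := by
    rw [hH, fromBlocks_multiply]
    simp [fromBlocks_one]
  -- g is invertible with right inverse H * gᴴ * H, hence gᴴ H g = H
  have hright : g * (H * g.conjTranspose * H) = 1 := by
    calc g * (H * g.conjTranspose * H) = (g * H * g.conjTranspose) * H := by noncomm_ring
    _ = H * H := by rw [hg]
    _ = 1 := hHH
  have hleft : (H * g.conjTranspose * H) * g = 1 := aux_comm hright
  have hg' : g.conjTranspose * H * g = H := by
    have h2 : (H * H) * (g.conjTranspose * H * g) = H * ((H * g.conjTranspose * H) * g) := by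
      noncomm_ring
    rw [hHH, one_mul] at h2
    rw [h2, hleft, mul_one]
  -- the quadratic form identity for Sum.elim vectors
  have hform : ∀ (a : Fin p → Quaternion ℝ) (b : Fin q → Quaternion ℝ),
      (star (Sum.elim a b) ⬝ᵥ (H *ᵥ Sum.elim a b)).re
        = (star a ⬝ᵥ a).re - (star b ⬝ᵥ b).re := by
    intro a b
    have hstar : star (Sum.elim a b) = Sum.elim (star a) (star b) := by
      funext i; cases i <;> rfl
    have hmv : H *ᵥ Sum.elim a b = Sum.elim a (-b) := by
      rw [hH, fromBlocks_mulVec]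
      simp [neg_mulVec]
    rw [hstar, hmv, sumElim_dotProduct_sumElim, dotProduct_neg]
    simp [Quaternion.re_add, Quaternion.re_neg, sub_eq_add_neg]
  -- key invariance
  have key : ∀ (x : Fin p → Quaternion ℝ) (y : Fin q → Quaternion ℝ),
      (star (A *ᵥ x + B *ᵥ y) ⬝ᵥ (A *ᵥ x + B *ᵥ y)).re
        - (star (C *ᵥ x + D *ᵥ y) ⬝ᵥ (C *ᵥ x + D *ᵥ y)).re
        = (star x ⬝ᵥ x).re - (star y ⬝ᵥ y).re := by
    intro x y
    have hgv : g *ᵥ Sum.elim x y = Sum.elim (A *ᵥ x + B *ᵥ y) (C *ᵥ x + D *ᵥ y) := by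
      rw [hgdef, fromBlocks_mulVec]
      rfl
    have h1 : star (g *ᵥ Sum.elim x y) ⬝ᵥ (H *ᵥ (g *ᵥ Sum.elim x y))
        = star (Sum.elim x y) ⬝ᵥ (H *ᵥ Sum.elim x y) := by
      rw [star_mulVec, dotProduct_mulVec, vecMul_vecMul, dotProduct_mulVec,
        vecMul_vecMul, mul_assoc, ← mul_assoc, hg', ← dotProduct_mulVec]
    have h2 := congrArg QuaternionAlgebra.re h1
    rw [hgv] at h2
    rw [hform, hform] at h2
    exact h2
  -- C X + D is injective on vectors
  have hCXD : ∀ w : Fin q → Quaternion ℝ, w ≠ 0 → (C * X + D) *ᵥ w ≠ 0 := by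
    intro w hw h0
    have hk := key (X *ᵥ w) w
    have hcd : C *ᵥ (X *ᵥ w) + D *ᵥ w = (C * X + D) *ᵥ w := by
      rw [add_mulVec, mulVec_mulVec]
    rw [hcd, h0] at hk
    have hq := hX w hw
    rw [aux_quad] at hq
    have h1 : 0 ≤ (star (A *ᵥ (X *ᵥ w) + B *ᵥ w) ⬝ᵥ (A *ᵥ (X *ᵥ w) + B *ᵥ w)).re :=
      aux_re_nonneg _
    simp only [star_zero, zero_dotProduct, Quaternion.re_zero, sub_zero] at hk
    linarith
  have hU : IsUnit (C * X + D) := aux_isUnit _ hCXD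
  set M := C * X + D with hMdef
  set E := Ring.inverse M with hEdef
  have hME : M * E = 1 := Ring.mul_inverse_cancel M hU
  have hEM : E * M = 1 := Ring.inverse_mul_cancel M hU
  refine ⟨hU, ?_, ?_⟩
  · ext ⟨v1, v2⟩
    constructor
    · rintro ⟨⟨x, y⟩, ⟨w, hw⟩, hv⟩
      obtain ⟨hx, hy⟩ := Prod.mk.injEq .. ▸ hw
      simp only at hv
      refine ⟨M *ᵥ w, ?_⟩
      rw [← hv, hx, hy]
      have hc2 : C *ᵥ (X *ᵥ w) + D *ᵥ w = M *ᵥ w := by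
        rw [mulVec_mulVec, ← add_mulVec, ← hMdef]
      have hc1 : A *ᵥ (X *ᵥ w) + B *ᵥ w = ((A * X + B) * E) *ᵥ (M *ᵥ w) := by
        rw [mulVec_mulVec, mulVec_mulVec, Matrix.mul_assoc, hEM, Matrix.mul_one, add_mulVec]
      exact Prod.ext (by rw [hc1]) (by rw [hc2])
    · rintro ⟨w, hw⟩
      refine ⟨(X *ᵥ (E *ᵥ w), E *ᵥ w), ⟨E *ᵥ w, rfl⟩, ?_⟩
      simp only
      rw [hw]
      have hc2 : C *ᵥ (X *ᵥ (E *ᵥ w)) + D *ᵥ (E *ᵥ w) = w := by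
        rw [mulVec_mulVec, ← add_mulVec, ← hMdef, mulVec_mulVec, hME, one_mulVec]
      have hc1 : A *ᵥ (X *ᵥ (E *ᵥ w)) + B *ᵥ (E *ᵥ w) = ((A * X + B) * E) *ᵥ w := by
        rw [← mulVec_mulVec, add_mulVec, ← mulVec_mulVec]
      exact Prod.ext (by rw [hc1]) (by rw [hc2])
  · intro w hw
    set u := E *ᵥ w with hudef
    have hMu : M *ᵥ u = w := by rw [hudef, mulVec_mulVec, hME, one_mulVec]
    have hu : u ≠ 0 := by
      intro h0
      rw [h0, mulVec_zero] at hMu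
      exact hw hMu.symm
    have hX'w : ((A * X + B) * E) *ᵥ w = A *ᵥ (X *ᵥ u) + B *ᵥ u := by
      rw [hudef, ← mulVec_mulVec, add_mulVec, ← mulVec_mulVec]
    have hwu : w = C *ᵥ (X *ᵥ u) + D *ᵥ u := by
      rw [← hMu, hMdef, add_mulVec, ← mulVec_mulVec]
    rw [aux_quad, hX'w]
    have hk := key (X *ᵥ u) u
    have hq := hX u hu
    rw [aux_quad] at hq
    rw [hwu] at *
    linarith [hk, hq]
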